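/- For every a ∈ H₀ (equivalently, every finite complex linear combination of characteristic functions of cylinder sets) there exists a constant M ≥ 0 such that ‖D(a·h) − a·D(h)‖_{L²(μ)} ≤ M ‖h‖_{L²(μ)} for all h ∈ H₀; that is, the commutator [D, π(a)] of D with the multiplication operator π(a) : h ↦ a·h is bounded on H₀. -/

import Mathlib

open MeasureTheory Filter
open scoped ENNReal NNReal

namespace SFT

variable {l : ℕ}

/-- The one-sided subshift of finite type determined by the `l × l` matrix `A`:
infinite sequences with transitions allowed by `A`. -/
abbrev SigmaA (l : ℕ) (A : Matrix (Fin l) (Fin l) ℕ) : Type :=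
  {ω : ℕ → Fin l // ∀ k, A (ω k) (ω (k + 1)) = 1}

/-- The left shift `σ` on `SigmaA l A`. -/
def shift {A : Matrix (Fin l) (Fin l) ℕ} (ω : SigmaA l A) : SigmaA l A :=
  ⟨fun n => ω.1 (n + 1), fun k => ω.2 (k + 1)⟩

/-- Birkhoff sums `S_k φ = ∑_{m<k} φ ∘ σ^m`. -/
def birkhoff {A : Matrix (Fin l) (Fin l) ℕ} (φ : SigmaA l A → ℝ) (k : ℕ) (ω : SigmaA l A) : ℝ :=
  ∑ m ∈ Finset.range k, φ (shift^[m] ω)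

/-- The matrix `A` has `0`-`1` entries and is irreducible and aperiodic
(some power of `A` has all entries strictly positive). -/
def Primitive (A : Matrix (Fin l) (Fin l) ℕ) : Prop :=
  (∀ i j, A i j = 0 ∨ A i j = 1) ∧ ∃ n : ℕ, 0 < n ∧ ∀ i j, 0 < (A ^ n) i j

/-- A finite word is admissible, i.e. belongs to `Σ_A^*`. -/
def Admissible (A : Matrix (Fin l) (Fin l) ℕ) (x : List (Fin l)) : Prop :=
  x ≠ [] ∧ ∀ (i : ℕ) (h : i + 1 < x.length), A (x[i]'(by omega)) (x[i + 1]'h) = 1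

/-- The cylinder set `[x]` of a finite word (the empty word gives all of `Σ_A`). -/
def cylinder (A : Matrix (Fin l) (Fin l) ℕ) (x : List (Fin l)) : Set (SigmaA l A) :=
  {ω | ∀ (i : ℕ) (h : i < x.length), ω.1 i = x[i]'h}

/-- The initial word `(ω_1, …, ω_k)` of `ω`. -/
def wordPrefix {A : Matrix (Fin l) (Fin l) ℕ} (ω : SigmaA l A) (k : ℕ) : List (Fin l) :=
  List.ofFn (fun i : Fin k => ω.1 i)

/-- `μ` is a Gibbs measure for the potential `φ` with pressure `P`:
`c⁻¹ ≤ μ([ω_1,…,ω_k]) / exp(S_kφ(ω) − kP) ≤ c` for some `c > 1`. -/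
def IsGibbs {A : Matrix (Fin l) (Fin l) ℕ} (φ : SigmaA l A → ℝ) (P : ℝ)
    (μ : Measure (SigmaA l A)) : Prop :=
  ∃ c : ℝ, 1 < c ∧ ∀ (ω : SigmaA l A) (k : ℕ), 0 < k →
    c⁻¹ ≤ (μ (cylinder A (wordPrefix ω k))).toReal / Real.exp (birkhoff φ k ω - k * P) ∧
      (μ (cylinder A (wordPrefix ω k))).toReal / Real.exp (birkhoff φ k ω - k * P) ≤ c

/-- `φ` is Hölder continuous with respect to the metric `d(ω,υ) = 2^{-(ω ∧ υ)}`: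
there are `C` and an exponent `s > 0` with `|φ(ω) − φ(υ)| ≤ C ⬝ d(ω,υ)^s`, i.e.
`|φ(ω) − φ(υ)| ≤ C ⬝ 2^{-sn}` whenever `ω` and `υ` agree in their first `n` coordinates. -/
def HolderCont {A : Matrix (Fin l) (Fin l) ℕ} (φ : SigmaA l A → ℝ) : Prop :=
  ∃ C s : ℝ, 0 < s ∧ ∀ (ω υ : SigmaA l A) (n : ℕ),
    (∀ i < n, ω.1 i = υ.1 i) → |φ ω - φ υ| ≤ C * (2 : ℝ) ^ (-(s * n))

/-- `α(x)`: the number of children of the word `x` (the row sum of `A` at the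
last letter of `x`). -/
def alpha (A : Matrix (Fin l) (Fin l) ℕ) (x : List (Fin l)) : ℕ :=
  match x.getLast? with
  | some a => ∑ i, A a i
  | none => 0

/-- The `m`-th child `x θ_x⁻¹(m)` of the word `x`, the ordering of the children
being given by `θinv x`. -/
def child (θinv : List (Fin l) → ℕ → Fin l) (x : List (Fin l)) (m : ℕ) : List (Fin l) :=
  x ++ [θinv x m]

/-- The characteristic function of the cylinder `[x]`, as a function on `Σ_A`. -/
noncomputable def indC (A : Matrix (Fin l) (Fin l) ℕ) (x : List (Fin l)) : SigmaA l A → ℂ :=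
  (cylinder A x).indicator 1

/-- The `L²(μ)` inner product of two functions (conjugate linear in the first slot). -/
noncomputable def innerMu (A : Matrix (Fin l) (Fin l) ℕ) (μ : Measure (SigmaA l A))
    (f g : SigmaA l A → ℂ) : ℂ :=
  ∫ ω, (starRingEnd ℂ) (f ω) * g ω ∂μ

/-- The Haar function `e_{x,j} = ∑_m μ([xθ_x⁻¹(m)])^{-1/2} ⟨f_{x,m}, U_x f_{x,j}⟩_x χ_{[xθ_x⁻¹(m)]}`
as a function on `Σ_A`; here `u x m j = ⟨f_{x,m}, U_x f_{x,j}⟩_x` are the matrix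
coefficients of `U_x` in the orthonormal basis `(f_{x,m})_m`. -/
noncomputable def haarFun (A : Matrix (Fin l) (Fin l) ℕ) (μ : Measure (SigmaA l A))
    (θinv : List (Fin l) → ℕ → Fin l) (u : List (Fin l) → ℕ → ℕ → ℝ)
    (x : List (Fin l)) (j : ℕ) : SigmaA l A → ℂ := fun ω =>
  ∑ m ∈ Finset.range (alpha A x),
    ((((Real.sqrt ((μ (cylinder A (child θinv x m))).toReal))⁻¹ * u x m j : ℝ) : ℂ)) *
      indC A (child θinv x m) ω

/-- `H₀`: the complex linear span of the characteristic functions of cylinder sets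
of admissible words, together with `χ_{Σ_A}` (the cylinder of the empty word). -/
noncomputable def H0 (A : Matrix (Fin l) (Fin l) ℕ) : Submodule ℂ (SigmaA l A → ℂ) :=
  Submodule.span ℂ {f | ∃ x : List (Fin l), (x = [] ∨ Admissible A x) ∧ f = indC A x}

/-- The operator `D` (the Dirac operator on the dense domain `H₀`, extended to all
functions by the same formula; on `H₀` all but finitely many summands vanish). -/
noncomputable def Dop (A : Matrix (Fin l) (Fin l) ℕ) (μ : Measure (SigmaA l A))
    (θinv : List (Fin l) → ℕ → Fin l) (u : List (Fin l) → ℕ → ℕ → ℝ)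
    (h : SigmaA l A → ℂ) : SigmaA l A → ℂ := fun ω =>
  (∑ a : Fin l,
      (((μ (cylinder A [a])).toReal : ℂ))⁻¹ * innerMu A μ (indC A [a]) h * indC A [a] ω)
    - innerMu A μ (indC A []) h * indC A [] ω
    + ∑' y : List (Fin l),
        Set.indicator {y : List (Fin l) | Admissible A y}
          (fun y => ((((alpha A y : ℝ) - 1) / (μ (cylinder A y)).toReal : ℝ) : ℂ) *
            ∑ j ∈ Finset.range (alpha A y - 1),
              innerMu A μ (haarFun A μ θinv u y j) h * haarFun A μ θinv u y j ω) y

section Aux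

variable {A : Matrix (Fin l) (Fin l) ℕ} {μ : Measure (SigmaA l A)}
variable {θinv : List (Fin l) → ℕ → Fin l} {u : List (Fin l) → ℕ → ℕ → ℝ}

lemma mem_cylinder_nil (ω : SigmaA l A) : ω ∈ cylinder A [] := by
  intro i hi; simp at hi

lemma indC_nil (ω : SigmaA l A) : indC A [] ω = 1 := by
  rw [indC, Set.indicator_of_mem (mem_cylinder_nil ω)]; rfl

lemma norm_indC_le (x : List (Fin l)) (ω : SigmaA l A) : ‖indC A x ω‖ ≤ 1 := by
  rw [indC]
  by_cases h : ω ∈ cylinder A x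
  · rw [Set.indicator_of_mem h]; simp
  · rw [Set.indicator_of_notMem h]; simp

lemma indC_of_mem {x : List (Fin l)} {ω : SigmaA l A} (h : ω ∈ cylinder A x) :
    indC A x ω = 1 := by
  rw [indC, Set.indicator_of_mem h]; rfl

lemma indC_of_not_mem {x : List (Fin l)} {ω : SigmaA l A} (h : ω ∉ cylinder A x) :
    indC A x ω = 0 := by
  rw [indC, Set.indicator_of_notMem h]

lemma measurableSet_cylinder (x : List (Fin l)) : MeasurableSet (cylinder A x) := by
  have hx : cylinder A x = ⋂ i : Fin x.length, {ω : SigmaA l A | ω.1 (i : ℕ) = x[(i : ℕ)]} := by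
    ext ω
    simp only [cylinder, Set.mem_setOf_eq, Set.mem_iInter]
    exact ⟨fun h i => h i i.2, fun h i hi => h ⟨i, hi⟩⟩
  rw [hx]
  refine MeasurableSet.iInter fun i => ?_
  have hm : Measurable fun ω : SigmaA l A => ω.1 (i : ℕ) :=
    (measurable_pi_apply _).comp measurable_subtype_coe
  exact hm (measurableSet_singleton _)

lemma measurable_indC (x : List (Fin l)) : Measurable (indC A x) :=
  measurable_const.indicator (measurableSet_cylinder x)

lemma measurable_haarFun (y : List (Fin l)) (j : ℕ) :
    Measurable (haarFun A μ θinv u y j) := by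
  unfold haarFun
  exact Finset.measurable_sum _ fun m _ => (measurable_indC _).const_mul _

lemma cylinder_subset_of_prefix {x y : List (Fin l)} (h : x <+: y) :
    cylinder A y ⊆ cylinder A x := by
  intro ω hω i hi
  rw [hω i (lt_of_lt_of_le hi h.length_le)]
  exact (List.IsPrefix.getElem h hi).symm

lemma haarFun_eq_zero {y : List (Fin l)} {j : ℕ} {ω : SigmaA l A}
    (hω : ω ∉ cylinder A y) : haarFun A μ θinv u y j ω = 0 := by
  unfold haarFun
  refine Finset.sum_eq_zero fun m _ => ?_
  have h1 : ω ∉ cylinder A (child θinv y m) := fun hc =>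
    hω (cylinder_subset_of_prefix (List.prefix_append y _) hc)
  rw [indC, Set.indicator_of_notMem h1, mul_zero]

/-- pointwise bound for the Haar functions. -/
noncomputable def haarBd (A : Matrix (Fin l) (Fin l) ℕ) (μ : Measure (SigmaA l A))
    (θinv : List (Fin l) → ℕ → Fin l) (u : List (Fin l) → ℕ → ℕ → ℝ)
    (y : List (Fin l)) (j : ℕ) : ℝ :=
  ∑ m ∈ Finset.range (alpha A y),
    ‖(((Real.sqrt ((μ (cylinder A (child θinv y m))).toReal))⁻¹ * u y m j : ℝ) : ℂ)‖

lemma haarBd_nonneg (y : List (Fin l)) (j : ℕ) : 0 ≤ haarBd A μ θinv u y j :=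
  Finset.sum_nonneg fun _ _ => norm_nonneg _

lemma norm_haarFun_le (y : List (Fin l)) (j : ℕ) (ω : SigmaA l A) :
    ‖haarFun A μ θinv u y j ω‖ ≤ haarBd A μ θinv u y j := by
  refine (norm_sum_le _ _).trans (Finset.sum_le_sum fun m _ => ?_)
  rw [norm_mul]
  exact (mul_le_mul_of_nonneg_left (norm_indC_le _ _) (norm_nonneg _)).trans
    (le_of_eq (mul_one _))

lemma exists_ne_of_not_prefix {x y : List (Fin l)} (hlen : x.length ≤ y.length)
    (h : ¬ x <+: y) :
    ∃ i, ∃ hi : i < x.length, x[i]'hi ≠ y[i]'(lt_of_lt_of_le hi hlen) := by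
  by_contra hc
  push_neg at hc
  apply h
  have hx : x = y.take x.length := by
    apply List.ext_getElem
    · simp [hlen]
    · intro i h1 h2
      rw [List.getElem_take]
      exact hc i h1
  rw [hx]
  exact List.take_prefix _ _

lemma norm_innerMu_le {g f : SigmaA l A → ℂ} {B : ℝ} (hB : 0 ≤ B)
    (hg : ∀ υ, ‖g υ‖ ≤ B) (hf : (∫⁻ υ, (‖f υ‖₊ : ℝ≥0∞) ∂μ) ≠ ∞) :
    ‖innerMu A μ g f‖ ≤ B * (∫⁻ υ, (‖f υ‖₊ : ℝ≥0∞) ∂μ).toReal := by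
  rw [innerMu]
  refine (norm_integral_le_lintegral_norm _).trans ?_
  have h1 : (∫⁻ υ, ENNReal.ofReal ‖(starRingEnd ℂ) (g υ) * f υ‖ ∂μ)
      ≤ ENNReal.ofReal B * ∫⁻ υ, (‖f υ‖₊ : ℝ≥0∞) ∂μ := by
    rw [← MeasureTheory.lintegral_const_mul' _ _ ENNReal.ofReal_ne_top]
    refine lintegral_mono fun υ => ?_
    rw [norm_mul, RCLike.norm_conj, ← enorm_eq_nnnorm, ← ofReal_norm, ← ENNReal.ofReal_mul hB]
    exact ENNReal.ofReal_le_ofReal (mul_le_mul_of_nonneg_right (hg υ) (norm_nonneg _))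
  refine le_trans (ENNReal.toReal_mono (ENNReal.mul_ne_top ENNReal.ofReal_ne_top hf) h1) ?_
  rw [ENNReal.toReal_mul, ENNReal.toReal_ofReal hB]

lemma lintegral_nnnorm_le_eLpNorm [IsProbabilityMeasure μ] {f : SigmaA l A → ℂ}
    (hf : Measurable f) :
    (∫⁻ υ, (‖f υ‖₊ : ℝ≥0∞) ∂μ) ≤ eLpNorm f 2 μ := by
  refine (eLpNorm_one_eq_lintegral_enorm (μ := μ) (f := f)).symm.trans_le ?_
  exact eLpNorm_le_eLpNorm_of_exponent_le (by norm_num) hf.aestronglyMeasurable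

lemma lintegral_nnnorm_ne_top [IsFiniteMeasure μ] {f : SigmaA l A → ℂ} {C : ℝ}
    (hb : ∀ ω, ‖f ω‖ ≤ C) :
    (∫⁻ υ, (‖f υ‖₊ : ℝ≥0∞) ∂μ) ≠ ∞ := by
  have h1 : (∫⁻ υ, (‖f υ‖₊ : ℝ≥0∞) ∂μ) ≤ ∫⁻ _, ENNReal.ofReal C ∂μ := by
    refine lintegral_mono fun υ => ?_
    rw [← enorm_eq_nnnorm, ← ofReal_norm]
    exact ENNReal.ofReal_le_ofReal (hb υ)
  rw [lintegral_const] at h1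
  exact ne_top_of_le_ne_top (ENNReal.mul_ne_top ENNReal.ofReal_ne_top (measure_ne_top μ _)) h1

lemma eLpNorm_ne_top_of_bounded [IsProbabilityMeasure μ] {f : SigmaA l A → ℂ} {C : ℝ}
    (hb : ∀ ω, ‖f ω‖ ≤ C) : eLpNorm f 2 μ ≠ ∞ := by
  refine ne_top_of_le_ne_top ?_ (eLpNorm_le_of_ae_bound (Filter.Eventually.of_forall hb))
  simp [measure_univ]

lemma integrable_of_bdd [IsFiniteMeasure μ] {f : SigmaA l A → ℂ} {C : ℝ}
    (hm : Measurable f) (hb : ∀ ω, ‖f ω‖ ≤ C) : Integrable f μ :=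
  ⟨hm.aestronglyMeasurable, HasFiniteIntegral.of_bounded (Filter.Eventually.of_forall hb)⟩

lemma L1_mul_le {a h : SigmaA l A → ℂ} {Ca : ℝ} (hCa : 0 ≤ Ca) (ha : ∀ υ, ‖a υ‖ ≤ Ca) :
    (∫⁻ υ, (‖a υ * h υ‖₊ : ℝ≥0∞) ∂μ) ≤ ENNReal.ofReal Ca * ∫⁻ υ, (‖h υ‖₊ : ℝ≥0∞) ∂μ := by
  rw [← MeasureTheory.lintegral_const_mul' _ _ ENNReal.ofReal_ne_top]
  refine lintegral_mono fun υ => ?_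
  rw [← enorm_eq_nnnorm, ← ofReal_norm, ← enorm_eq_nnnorm, ← ofReal_norm, ← ENNReal.ofReal_mul hCa,
    norm_mul]
  exact ENNReal.ofReal_le_ofReal (mul_le_mul_of_nonneg_right (ha υ) (norm_nonneg _))

/-- every element of `H₀` is a finite linear combination of cylinder indicators. -/
lemma H0_repr {f : SigmaA l A → ℂ} (hf : f ∈ H0 A) :
    ∃ (n : ℕ) (c : Fin n → ℂ) (z : Fin n → List (Fin l)),
      (∀ k, z k = [] ∨ Admissible A (z k)) ∧
        f = fun ω => ∑ k, c k * indC A (z k) ω := by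
  rw [H0, Submodule.mem_span_set'] at hf
  obtain ⟨n, c, g, hg⟩ := hf
  choose z hz1 hz2 using fun k => (g k).2
  refine ⟨n, c, z, hz1, ?_⟩
  funext ω
  rw [← hg]
  rw [Finset.sum_apply]
  refine Finset.sum_congr rfl fun k _ => ?_
  rw [Pi.smul_apply, hz2 k, smul_eq_mul]

lemma norm_comb_le {n : ℕ} (c : Fin n → ℂ) (z : Fin n → List (Fin l)) (ω : SigmaA l A) :
    ‖∑ k, c k * indC A (z k) ω‖ ≤ ∑ k, ‖c k‖ := by
  refine (norm_sum_le _ _).trans (Finset.sum_le_sum fun k _ => ?_)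
  rw [norm_mul]
  exact (mul_le_mul_of_nonneg_left (norm_indC_le _ _) (norm_nonneg _)).trans
    (le_of_eq (mul_one _))

lemma measurable_comb {n : ℕ} (c : Fin n → ℂ) (z : Fin n → List (Fin l)) :
    Measurable fun ω : SigmaA l A => ∑ k, c k * indC A (z k) ω :=
  Finset.measurable_sum _ fun k _ => (measurable_indC _).const_mul _

/-- decomposition of the inner product against a product with a combination. -/
lemma innerMu_comb_mul [IsFiniteMeasure μ] {g : SigmaA l A → ℂ} {Bg : ℝ}
    (hgm : Measurable g) (hgb : ∀ υ, ‖g υ‖ ≤ Bg)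
    {n : ℕ} (c : Fin n → ℂ) (z : Fin n → List (Fin l))
    {h : SigmaA l A → ℂ} {Ch : ℝ} (hhm : Measurable h) (hhb : ∀ υ, ‖h υ‖ ≤ Ch) :
    innerMu A μ g (fun υ => (∑ k, c k * indC A (z k) υ) * h υ)
      = ∑ k, c k * innerMu A μ g (fun υ => indC A (z k) υ * h υ) := by
  have hCh : (0:ℝ) ≤ max Ch 0 := le_max_right _ _
  have hBg : (0:ℝ) ≤ max Bg 0 := le_max_right _ _
  unfold innerMu
  have key : (fun υ => (starRingEnd ℂ) (g υ) * ((∑ k, c k * indC A (z k) υ) * h υ))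
      = fun υ => ∑ k, c k * ((starRingEnd ℂ) (g υ) * (indC A (z k) υ * h υ)) := by
    funext υ
    rw [Finset.sum_mul, Finset.mul_sum]
    exact Finset.sum_congr rfl fun k _ => by ring
  rw [key, MeasureTheory.integral_finset_sum]
  · exact Finset.sum_congr rfl fun k _ => MeasureTheory.integral_const_mul _ _
  · intro k _
    have hmeas : Measurable fun υ : SigmaA l A =>
        c k * ((starRingEnd ℂ) (g υ) * (indC A (z k) υ * h υ)) :=
      ((RCLike.continuous_conj.measurable.comp hgm).mul
        ((measurable_indC _).mul hhm)).const_mul _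
    refine integrable_of_bdd (C := ‖c k‖ * (max Bg 0 * (1 * max Ch 0))) hmeas fun υ => ?_
    rw [norm_mul, norm_mul]
    refine mul_le_mul_of_nonneg_left ?_ (norm_nonneg _)
    rw [norm_mul, RCLike.norm_conj]
    refine mul_le_mul ((hgb υ).trans (le_max_left _ _)) ?_
      (mul_nonneg (norm_nonneg _) (norm_nonneg _)) hBg
    exact mul_le_mul (norm_indC_le _ _) ((hhb υ).trans (le_max_left _ _))
      (norm_nonneg _) zero_le_one

/-- the key pointwise cancellation of the commutator in the Haar terms of level
at least the length of the generating word. -/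
lemma cancel_term {x y : List (Fin l)} (hlen : x.length ≤ y.length)
    (h : SigmaA l A → ℂ) (j : ℕ) (ω : SigmaA l A) :
    innerMu A μ (haarFun A μ θinv u y j) (fun υ => indC A x υ * h υ)
        * haarFun A μ θinv u y j ω
      = indC A x ω *
        (innerMu A μ (haarFun A μ θinv u y j) h * haarFun A μ θinv u y j ω) := by
  by_cases hp : x <+: y
  · have hsub := cylinder_subset_of_prefix (A := A) hp
    have h1 : innerMu A μ (haarFun A μ θinv u y j) (fun υ => indC A x υ * h υ)
        = innerMu A μ (haarFun A μ θinv u y j) h := by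
      unfold innerMu
      refine integral_congr_ae (Filter.Eventually.of_forall fun υ => ?_)
      simp only []
      by_cases hυ : υ ∈ cylinder A y
      · rw [indC_of_mem (hsub hυ), one_mul]
      · rw [haarFun_eq_zero hυ]; simp
    rw [h1]
    by_cases hω : ω ∈ cylinder A y
    · rw [indC_of_mem (hsub hω), one_mul]
    · rw [haarFun_eq_zero hω]; ring
  · obtain ⟨i, hi, hne⟩ := exists_ne_of_not_prefix hlen hp
    have hdisj : ∀ υ : SigmaA l A, υ ∈ cylinder A y → indC A x υ = 0 := by
      intro υ hυ
      refine indC_of_not_mem fun hx => hne ?_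
      rw [← hx i hi, hυ i (lt_of_lt_of_le hi hlen)]
    have h1 : innerMu A μ (haarFun A μ θinv u y j) (fun υ => indC A x υ * h υ) = 0 := by
      unfold innerMu
      rw [← MeasureTheory.integral_zero (SigmaA l A) ℂ (μ := μ)]
      refine integral_congr_ae (Filter.Eventually.of_forall fun υ => ?_)
      simp only []
      by_cases hυ : υ ∈ cylinder A y
      · rw [hdisj υ hυ]; ring
      · rw [haarFun_eq_zero hυ]; simp
    rw [h1, zero_mul]
    by_cases hω : ω ∈ cylinder A y
    · rw [hdisj ω hω]; ring
    · rw [haarFun_eq_zero hω]; ring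

end Aux


section Aux2

variable {A : Matrix (Fin l) (Fin l) ℕ} {μ : Measure (SigmaA l A)}
variable {θinv : List (Fin l) → ℕ → Fin l} {u : List (Fin l) → ℕ → ℕ → ℝ}

/-- bound on the "level one" part of `D`. -/
lemma S1_bound {f : SigmaA l A → ℂ} {L : ℝ} (hL : 0 ≤ L)
    (oracle : ∀ (g : SigmaA l A → ℂ) (B : ℝ), 0 ≤ B → (∀ υ, ‖g υ‖ ≤ B) →
      ‖innerMu A μ g f‖ ≤ B * L) (ω : SigmaA l A) :
    ‖(∑ b : Fin l, ((((μ (cylinder A [b])).toReal : ℝ) : ℂ))⁻¹ * innerMu A μ (indC A [b]) f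
          * indC A [b] ω)
        - innerMu A μ (indC A []) f * indC A [] ω‖
      ≤ ((∑ b : Fin l, ‖((((μ (cylinder A [b])).toReal : ℝ) : ℂ))⁻¹‖) + 1) * L := by
  refine (norm_sub_le _ _).trans ?_
  rw [add_mul, one_mul]
  refine add_le_add ?_ ?_
  · refine (norm_sum_le _ _).trans ?_
    rw [Finset.sum_mul]
    refine Finset.sum_le_sum fun b _ => ?_
    rw [norm_mul, norm_mul]
    have h1 : ‖innerMu A μ (indC A [b]) f‖ ≤ L :=
      (oracle _ 1 zero_le_one (norm_indC_le _)).trans_eq (one_mul L)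
    refine le_trans (mul_le_mul_of_nonneg_left (norm_indC_le [b] ω)
      (mul_nonneg (norm_nonneg _) (norm_nonneg _))) ?_
    rw [mul_one]
    exact mul_le_mul_of_nonneg_left h1 (norm_nonneg _)
  · rw [norm_mul, indC_nil, norm_one, mul_one]
    exact (oracle _ 1 zero_le_one (norm_indC_le _)).trans_eq (one_mul L)

/-- bound on the individual Haar wavelet terms of `D`. -/
lemma T_bound {f : SigmaA l A → ℂ} {L : ℝ} (hL : 0 ≤ L)
    (oracle : ∀ (g : SigmaA l A → ℂ) (B : ℝ), 0 ≤ B → (∀ υ, ‖g υ‖ ≤ B) →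
      ‖innerMu A μ g f‖ ≤ B * L) (y : List (Fin l)) (ω : SigmaA l A) :
    ‖Set.indicator {y : List (Fin l) | Admissible A y}
        (fun y => ((((alpha A y : ℝ) - 1) / (μ (cylinder A y)).toReal : ℝ) : ℂ) *
          ∑ j ∈ Finset.range (alpha A y - 1),
            innerMu A μ (haarFun A μ θinv u y j) f * haarFun A μ θinv u y j ω) y‖
      ≤ ‖((((alpha A y : ℝ) - 1) / (μ (cylinder A y)).toReal : ℝ) : ℂ)‖ *
          (∑ j ∈ Finset.range (alpha A y - 1), haarBd A μ θinv u y j ^ 2) * L := by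
  refine (norm_indicator_le_norm_self _ _).trans ?_
  rw [norm_mul, mul_assoc]
  refine mul_le_mul_of_nonneg_left ?_ (norm_nonneg _)
  refine (norm_sum_le _ _).trans ?_
  rw [Finset.sum_mul]
  refine Finset.sum_le_sum fun j _ => ?_
  rw [norm_mul]
  have h1 : ‖innerMu A μ (haarFun A μ θinv u y j) f‖ ≤ haarBd A μ θinv u y j * L :=
    oracle _ _ (haarBd_nonneg y j) (fun υ => norm_haarFun_le y j υ)
  calc ‖innerMu A μ (haarFun A μ θinv u y j) f‖ * ‖haarFun A μ θinv u y j ω‖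
      ≤ (haarBd A μ θinv u y j * L) * haarBd A μ θinv u y j :=
        mul_le_mul h1 (norm_haarFun_le y j ω) (norm_nonneg _)
          (mul_nonneg (haarBd_nonneg _ _) hL)
    _ = haarBd A μ θinv u y j ^ 2 * L := by ring

/-- elementary rearrangement. -/
lemma main_split (X Y W V aw : ℂ) (b1 b2 : ℝ)
    (h1 : ‖X - aw * Y‖ ≤ b1) (h2 : ‖W - aw * V‖ ≤ b2) :
    ‖(X + W) - aw * (Y + V)‖ ≤ b1 + b2 := by
  have hE : (X + W) - aw * (Y + V) = (X - aw * Y) + (W - aw * V) := by ring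
  rw [hE]
  exact (norm_add_le _ _).trans (add_le_add h1 h2)

end Aux2


/-- For every `a ∈ H₀` the commutator `[D, π(a)]` is bounded on `H₀`:
`‖D(a·h) − a·D(h)‖₂ ≤ M ‖h‖₂` for some `M ≥ 0` and all `h ∈ H₀`. -/
theorem commutator_bounded
    (hl : 2 ≤ l) (A : Matrix (Fin l) (Fin l) ℕ) (hA : Primitive A)
    (φ : SigmaA l A → ℝ) (hφ : HolderCont φ) (P : ℝ)
    (μ : Measure (SigmaA l A)) [IsProbabilityMeasure μ] (hGibbs : IsGibbs φ P μ)
    (θinv : List (Fin l) → ℕ → Fin l)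
    (hθ : ∀ (x : List (Fin l)) (hx : Admissible A x),
      Set.BijOn (θinv x) (Set.Iio (alpha A x)) {y : Fin l | A (x.getLast hx.1) y = 1})
    (u : List (Fin l) → ℕ → ℕ → ℝ)
    (hu_orth : ∀ x, Admissible A x → ∀ j < alpha A x, ∀ j' < alpha A x,
      ∑ m ∈ Finset.range (alpha A x), u x m j * u x m j' = if j = j' then 1 else 0)
    (hu_last : ∀ x, Admissible A x → ∀ m < alpha A x,
      u x m (alpha A x - 1) =
        (Real.sqrt ((μ (cylinder A x)).toReal))⁻¹ *
          Real.sqrt ((μ (cylinder A (child θinv x m))).toReal)) :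
    ∀ a ∈ H0 A, ∃ M : ℝ, 0 ≤ M ∧ ∀ h ∈ H0 A,
      eLpNorm (fun ω => Dop A μ θinv u (fun ω' => a ω' * h ω') ω - a ω * Dop A μ θinv u h ω) 2 μ
        ≤ ENNReal.ofReal M * eLpNorm h 2 μ := by
  classical
  intro a ha
  obtain ⟨n, c, z, hz, haeq⟩ := H0_repr ha
  set Ca : ℝ := ∑ k, ‖c k‖ with hCadef
  have hCa0 : 0 ≤ Ca := Finset.sum_nonneg fun _ _ => norm_nonneg _
  have hab : ∀ ω, ‖a ω‖ ≤ Ca := by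
    intro ω; rw [haeq, hCadef]; exact norm_comb_le c z ω
  set N : ℕ := Finset.univ.sup fun k => (z k).length with hNdef
  set F : Finset (List (Fin l)) := (List.finite_length_lt (Fin l) N).toFinset with hFdef
  set K : ℝ := ∑ b : Fin l, ‖((((μ (cylinder A [b])).toReal : ℝ) : ℂ))⁻¹‖ with hKdef
  have hK0 : 0 ≤ K := Finset.sum_nonneg fun _ _ => norm_nonneg _
  set E : ℝ := ∑ y ∈ F, ‖((((alpha A y : ℝ) - 1) / (μ (cylinder A y)).toReal : ℝ) : ℂ)‖ *
      (∑ j ∈ Finset.range (alpha A y - 1), haarBd A μ θinv u y j ^ 2) with hEdef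
  have hE0 : 0 ≤ E := Finset.sum_nonneg fun y _ => mul_nonneg (norm_nonneg _)
    (Finset.sum_nonneg fun j _ => sq_nonneg _)
  set M0 : ℝ := 2 * Ca * ((K + 1) + E) with hM0def
  have hM00 : 0 ≤ M0 := by
    rw [hM0def]
    exact mul_nonneg (mul_nonneg (by norm_num) hCa0)
      (add_nonneg (add_nonneg hK0 zero_le_one) hE0)
  refine ⟨M0, hM00, ?_⟩
  intro h hh
  obtain ⟨nh, d, w, hw, hheq⟩ := H0_repr hh
  have hCh : ∀ ω, ‖h ω‖ ≤ ∑ k, ‖d k‖ := by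
    intro ω; rw [hheq]; exact norm_comb_le d w ω
  have hhm : Measurable h := by rw [hheq]; exact measurable_comb d w
  set r : ℝ := (eLpNorm h 2 μ).toReal with hrdef
  have hr0 : 0 ≤ r := ENNReal.toReal_nonneg
  have heLp : eLpNorm h 2 μ ≠ ∞ := eLpNorm_ne_top_of_bounded hCh
  have hL1h : (∫⁻ υ, (‖h υ‖₊ : ℝ≥0∞) ∂μ) ≠ ∞ := lintegral_nnnorm_ne_top hCh
  have hL1h_le : (∫⁻ υ, (‖h υ‖₊ : ℝ≥0∞) ∂μ).toReal ≤ r :=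
    ENNReal.toReal_mono heLp (lintegral_nnnorm_le_eLpNorm hhm)
  have habh : ∀ ω, ‖a ω * h ω‖ ≤ Ca * (∑ k, ‖d k‖) := fun ω => by
    rw [norm_mul]
    exact mul_le_mul (hab ω) (hCh ω) (norm_nonneg _) hCa0
  have hL1ah_ne : (∫⁻ υ, (‖a υ * h υ‖₊ : ℝ≥0∞) ∂μ) ≠ ∞ := lintegral_nnnorm_ne_top habh
  have hL1ah_le : (∫⁻ υ, (‖a υ * h υ‖₊ : ℝ≥0∞) ∂μ).toReal ≤ Ca * r := by
    have h1 : (∫⁻ υ, (‖a υ * h υ‖₊ : ℝ≥0∞) ∂μ) ≤ ENNReal.ofReal Ca * eLpNorm h 2 μ :=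
      (L1_mul_le hCa0 hab).trans (mul_le_mul_right (lintegral_nnnorm_le_eLpNorm hhm) _)
    refine (ENNReal.toReal_mono (ENNReal.mul_ne_top ENNReal.ofReal_ne_top heLp) h1).trans ?_
    rw [ENNReal.toReal_mul, ENNReal.toReal_ofReal hCa0]
  have oracleh : ∀ (g : SigmaA l A → ℂ) (B : ℝ), 0 ≤ B → (∀ υ, ‖g υ‖ ≤ B) →
      ‖innerMu A μ g h‖ ≤ B * r := fun g B hB hg =>
    (norm_innerMu_le hB hg hL1h).trans (mul_le_mul_of_nonneg_left hL1h_le hB)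
  have oracleah : ∀ (g : SigmaA l A → ℂ) (B : ℝ), 0 ≤ B → (∀ υ, ‖g υ‖ ≤ B) →
      ‖innerMu A μ g (fun ω' => a ω' * h ω')‖ ≤ B * (Ca * r) := fun g B hB hg =>
    (norm_innerMu_le hB hg hL1ah_ne).trans (mul_le_mul_of_nonneg_left hL1ah_le hB)
  -- the pointwise bound on the commutator
  have hpt : ∀ ω : SigmaA l A,
      ‖Dop A μ θinv u (fun ω' => a ω' * h ω') ω - a ω * Dop A μ θinv u h ω‖ ≤ M0 * r := by
    intro ω
    -- cancellation at deep levels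
    have hj : ∀ (y : List (Fin l)), N ≤ y.length → ∀ j : ℕ,
        innerMu A μ (haarFun A μ θinv u y j) (fun ω' => a ω' * h ω') * haarFun A μ θinv u y j ω
          = a ω * (innerMu A μ (haarFun A μ θinv u y j) h * haarFun A μ θinv u y j ω) := by
      intro y hy j
      have hdec : innerMu A μ (haarFun A μ θinv u y j) (fun ω' => a ω' * h ω')
          = ∑ k, c k * innerMu A μ (haarFun A μ θinv u y j)
              (fun υ => indC A (z k) υ * h υ) := by
        rw [haeq]
        exact innerMu_comb_mul (measurable_haarFun y j) (fun υ => norm_haarFun_le y j υ)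
          c z hhm hCh
      have haω : a ω = ∑ k, c k * indC A (z k) ω := by rw [haeq]
      rw [hdec, haω, Finset.sum_mul, Finset.sum_mul]
      refine Finset.sum_congr rfl fun k _ => ?_
      have hk : (z k).length ≤ y.length := by
        refine le_trans ?_ hy
        rw [hNdef]
        exact Finset.le_sup (f := fun k => (z k).length) (Finset.mem_univ k)
      rw [mul_assoc, cancel_term hk h j ω]
      ring
    have hcancel : ∀ y : List (Fin l), y ∉ F →
        Set.indicator {y : List (Fin l) | Admissible A y}
          (fun y => ((((alpha A y : ℝ) - 1) / (μ (cylinder A y)).toReal : ℝ) : ℂ) *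
            ∑ j ∈ Finset.range (alpha A y - 1),
              innerMu A μ (haarFun A μ θinv u y j) (fun ω' => a ω' * h ω') *
                haarFun A μ θinv u y j ω) y
          - a ω * Set.indicator {y : List (Fin l) | Admissible A y}
            (fun y => ((((alpha A y : ℝ) - 1) / (μ (cylinder A y)).toReal : ℝ) : ℂ) *
              ∑ j ∈ Finset.range (alpha A y - 1),
                innerMu A μ (haarFun A μ θinv u y j) h * haarFun A μ θinv u y j ω) y = 0 := by
      intro y hyF
      have hNy : N ≤ y.length := by
        by_contra hlt
        push_neg at hlt
        refine hyF ?_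
        rw [hFdef]
        exact (List.finite_length_lt (Fin l) N).mem_toFinset.mpr hlt
      by_cases hadm : y ∈ {y : List (Fin l) | Admissible A y}
      · rw [Set.indicator_of_mem hadm, Set.indicator_of_mem hadm]
        rw [show (∑ j ∈ Finset.range (alpha A y - 1),
            innerMu A μ (haarFun A μ θinv u y j) (fun ω' => a ω' * h ω') *
              haarFun A μ θinv u y j ω)
          = ∑ j ∈ Finset.range (alpha A y - 1),
              a ω * (innerMu A μ (haarFun A μ θinv u y j) h * haarFun A μ θinv u y j ω)
          from Finset.sum_congr rfl fun j _ => hj y hNy j]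
        rw [← Finset.mul_sum]
        ring
      · rw [Set.indicator_of_notMem hadm, Set.indicator_of_notMem hadm, mul_zero, sub_zero]
    -- the tsum (Haar wavelet) part
    have hpart2 : ‖(∑' y : List (Fin l), Set.indicator {y : List (Fin l) | Admissible A y}
          (fun y => ((((alpha A y : ℝ) - 1) / (μ (cylinder A y)).toReal : ℝ) : ℂ) *
            ∑ j ∈ Finset.range (alpha A y - 1),
              innerMu A μ (haarFun A μ θinv u y j) (fun ω' => a ω' * h ω') *
                haarFun A μ θinv u y j ω) y)
        - a ω * ∑' y : List (Fin l), Set.indicator {y : List (Fin l) | Admissible A y}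
          (fun y => ((((alpha A y : ℝ) - 1) / (μ (cylinder A y)).toReal : ℝ) : ℂ) *
            ∑ j ∈ Finset.range (alpha A y - 1),
              innerMu A μ (haarFun A μ θinv u y j) h * haarFun A μ θinv u y j ω) y‖
        ≤ E * (Ca * r) + Ca * (E * r) := by
      set Q1 : List (Fin l) → ℂ := fun y => Set.indicator {y : List (Fin l) | Admissible A y}
          (fun y => ((((alpha A y : ℝ) - 1) / (μ (cylinder A y)).toReal : ℝ) : ℂ) *
            ∑ j ∈ Finset.range (alpha A y - 1),
              innerMu A μ (haarFun A μ θinv u y j) (fun ω' => a ω' * h ω') *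
                haarFun A μ θinv u y j ω) y with hQ1
      set Q2 : List (Fin l) → ℂ := fun y => Set.indicator {y : List (Fin l) | Admissible A y}
          (fun y => ((((alpha A y : ℝ) - 1) / (μ (cylinder A y)).toReal : ℝ) : ℂ) *
            ∑ j ∈ Finset.range (alpha A y - 1),
              innerMu A μ (haarFun A μ θinv u y j) h * haarFun A μ θinv u y j ω) y with hQ2
      have hΔ : ∀ y ∉ F, Q1 y - a ω * Q2 y = 0 := by
        intro y hy
        simp only [hQ1, hQ2]
        exact hcancel y hy
      have hQ1b : ∀ y, ‖Q1 y‖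
          ≤ ‖((((alpha A y : ℝ) - 1) / (μ (cylinder A y)).toReal : ℝ) : ℂ)‖ *
            (∑ j ∈ Finset.range (alpha A y - 1), haarBd A μ θinv u y j ^ 2) * (Ca * r) := by
        intro y
        simp only [hQ1]
        exact T_bound (mul_nonneg hCa0 hr0) oracleah y ω
      have hQ2b : ∀ y, ‖Q2 y‖
          ≤ ‖((((alpha A y : ℝ) - 1) / (μ (cylinder A y)).toReal : ℝ) : ℂ)‖ *
            (∑ j ∈ Finset.range (alpha A y - 1), haarBd A μ θinv u y j ^ 2) * r := by
        intro y
        simp only [hQ2]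
        exact T_bound hr0 oracleh y ω
      have hstep : ‖(∑' y, Q1 y) - a ω * ∑' y, Q2 y‖
          ≤ ∑ y ∈ F, (‖Q1 y‖ + Ca * ‖Q2 y‖) := by
        rw [← tsum_mul_left]
        by_cases hs : Summable fun y => a ω * Q2 y
        · have hΔsum : Summable fun y => Q1 y - a ω * Q2 y :=
            summable_of_ne_finset_zero hΔ
          have h1 : (∑' y, Q1 y)
              = (∑ y ∈ F, (Q1 y - a ω * Q2 y)) + ∑' y, a ω * Q2 y := by
            rw [← tsum_eq_sum (L := SummationFilter.unconditional _) hΔ, ← Summable.tsum_add hΔsum hs]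
            exact tsum_congr fun y => by ring
          rw [h1, add_sub_cancel_right]
          refine (norm_sum_le _ _).trans (Finset.sum_le_sum fun y _ => ?_)
          refine (norm_sub_le _ _).trans (add_le_add le_rfl ?_)
          rw [norm_mul]
          exact mul_le_mul_of_nonneg_right (hab ω) (norm_nonneg _)
        · have hns1 : ¬ Summable Q1 := by
            intro hQ1s
            apply hs
            have h2 := hQ1s.sub (summable_of_ne_finset_zero (s := F) hΔ)
            simpa [sub_sub_cancel] using h2
          rw [tsum_eq_zero_of_not_summable hns1, tsum_eq_zero_of_not_summable hs,
            sub_zero, norm_zero]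
          exact Finset.sum_nonneg fun y _ =>
            add_nonneg (norm_nonneg _) (mul_nonneg hCa0 (norm_nonneg _))
      refine hstep.trans ?_
      refine le_trans (Finset.sum_le_sum fun y (_ : y ∈ F) =>
        add_le_add (hQ1b y) (mul_le_mul_of_nonneg_left (hQ2b y) hCa0)) (le_of_eq ?_)
      rw [hEdef, Finset.sum_add_distrib, ← Finset.sum_mul, ← Finset.mul_sum, ← Finset.sum_mul]
    -- the level-one part
    have hpart1 : ‖((∑ b : Fin l, ((((μ (cylinder A [b])).toReal : ℝ) : ℂ))⁻¹ *
            innerMu A μ (indC A [b]) (fun ω' => a ω' * h ω') * indC A [b] ω)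
          - innerMu A μ (indC A []) (fun ω' => a ω' * h ω') * indC A [] ω)
        - a ω * ((∑ b : Fin l, ((((μ (cylinder A [b])).toReal : ℝ) : ℂ))⁻¹ *
            innerMu A μ (indC A [b]) h * indC A [b] ω)
          - innerMu A μ (indC A []) h * indC A [] ω)‖
        ≤ (K + 1) * (Ca * r) + Ca * ((K + 1) * r) := by
      rw [hKdef]
      refine (norm_sub_le _ _).trans
        (add_le_add (S1_bound (mul_nonneg hCa0 hr0) oracleah ω) ?_)
      rw [norm_mul]
      exact mul_le_mul (hab ω) (S1_bound hr0 oracleh ω) (norm_nonneg _) hCa0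
    simp only [Dop]
    refine (main_split _ _ _ _ (a ω) _ _ hpart1 hpart2).trans (le_of_eq ?_)
    rw [hM0def]
    ring
  calc eLpNorm (fun ω => Dop A μ θinv u (fun ω' => a ω' * h ω') ω
          - a ω * Dop A μ θinv u h ω) 2 μ
      ≤ eLpNorm (fun _ : SigmaA l A => M0 * r) 2 μ :=
        eLpNorm_mono fun ω => (hpt ω).trans (le_abs_self _)
    _ ≤ ENNReal.ofReal M0 * eLpNorm h 2 μ := by
        rw [eLpNorm_const _ (by norm_num : (2 : ℝ≥0∞) ≠ 0) (IsProbabilityMeasure.ne_zero μ)]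
        simp only [measure_univ, ENNReal.one_rpow, mul_one]
        rw [← ofReal_norm, Real.norm_eq_abs,
          abs_of_nonneg (mul_nonneg hM00 hr0), ENNReal.ofReal_mul hM00, hrdef]
        exact mul_le_mul_right ENNReal.ofReal_toReal_le _

end SFT
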